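/- Let s ≥ 2 and k ≥ 3 be integers and let ∑_{i∈W} a_i x_i + a^0 ∑_{i∉W} x_i ≥ (s+1)a^0 be a facet defining (s+1)-inequality of Q(C_{sk}^k). Then: (1) |x^i ∩ W| = 1 for every i ∈ Z_{sk}, and |W| = k; (2) a_i = 2a^0 for every i ∈ W. Consequently the inequality equals a^0 times the inequality 2∑_{i∈W} x_i + ∑_{i∉W} x_i ≥ s+1. -/

import Mathlib

/-- `Cseg n k i` is the set `C^i = {i, i+1, …, i+k−1} ⊆ ℤ_n`. -/
def Cseg (n k : ℕ) (i : ZMod n) : Finset (ZMod n) :=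
  (Finset.range k).image fun h : ℕ => i + (h : ZMod n)

/-- A cover of the circulant matrix `C_n^k`. -/
def IsCover (n k : ℕ) (x : Finset (ZMod n)) : Prop :=
  ∀ i : ZMod n, (x ∩ Cseg n k i).Nonempty

/-- A minimal cover of `C_n^k`. -/
def IsMinimalCover (n k : ℕ) (x : Finset (ZMod n)) : Prop :=
  IsCover n k x ∧ ∀ y : Finset (ZMod n), y ⊂ x → ¬ IsCover n k y

/-- The covering number `τ(C_n^k)`. -/
noncomputable def coveringNumber (n k : ℕ) : ℕ :=
  sInf {m : ℕ | ∃ x : Finset (ZMod n), IsCover n k x ∧ x.card = m}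

/-- A minimum cover of `C_n^k`. -/
noncomputable def IsMinimumCover (n k : ℕ) (x : Finset (ZMod n)) : Prop :=
  IsCover n k x ∧ x.card = coveringNumber n k

/-- `xcov n k i` is the cover `x^i = {i + h·k : 0 ≤ h ≤ ⌈n/k⌉ − 1}`. -/
def xcov (n k : ℕ) (i : ZMod n) : Finset (ZMod n) :=
  (Finset.range ((n + k - 1) / k)).image fun h : ℕ => i + ((h * k : ℕ) : ZMod n)

/-- The cyclic closed interval `[a,b]_n` of `ℤ_n`. -/
def cycInterval (n : ℕ) (a b : ZMod n) : Finset (ZMod n) :=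
  (Finset.range ((b - a).val + 1)).image fun h : ℕ => a + (h : ZMod n)

/-- The inequality `a·x ≥ α` is valid for `Q(C_n^k)`. -/
def IsValid (n k : ℕ) (a : ZMod n → ℤ) (α : ℤ) : Prop :=
  ∀ x : Finset (ZMod n), IsCover n k x → α ≤ ∑ i ∈ x, a i

/-- A root of a valid inequality: a cover satisfying it with equality. -/
def IsRoot (n k : ℕ) (a : ZMod n → ℤ) (α : ℤ) (x : Finset (ZMod n)) : Prop :=
  IsCover n k x ∧ ∑ i ∈ x, a i = α

/-- Characteristic vector of a subset of `ℤ_n`. -/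
noncomputable def charVec (n : ℕ) (x : Finset (ZMod n)) : ZMod n → ℝ :=
  fun i => if i ∈ x then 1 else 0

/-- `a·x ≥ α` is facet defining for `Q(C_n^k)`: it is valid, and the characteristic
vectors of its roots affinely span an `(n−1)`-dimensional affine subspace of `ℝ^n`. -/
def IsFacet (n k : ℕ) (a : ZMod n → ℤ) (α : ℤ) : Prop :=
  IsValid n k a α ∧
    Module.finrank ℝ
      (affineSpan ℝ
        {v : ZMod n → ℝ | ∃ x : Finset (ZMod n), IsRoot n k a α x ∧ v = charVec n x}).direction
      = n - 1

/-- `a·x ≥ α` is a positive multiple of one of the boolean inequalities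
`x_i ≥ 0`, `−x_i ≥ −1`, `∑_{j ∈ C^i} x_j ≥ 1`. -/
def IsBooleanMultiple (n k : ℕ) (a : ZMod n → ℤ) (α : ℤ) : Prop :=
  ∃ c : ℤ, 0 < c ∧
    ( (∃ i : ZMod n, (∀ j, a j = if j = i then c else 0) ∧ α = 0)
    ∨ (∃ i : ZMod n, (∀ j, a j = if j = i then -c else 0) ∧ α = -c)
    ∨ (∃ i : ZMod n, (∀ j, a j = if j ∈ Cseg n k i then c else 0) ∧ α = c) )

/-- `a·x ≥ α` is a positive multiple of the rank constraint `∑ x_i ≥ ⌈n/k⌉`. -/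
def IsRankMultiple (n k : ℕ) (a : ZMod n → ℤ) (α : ℤ) : Prop :=
  ∃ c : ℤ, 0 < c ∧ (∀ j, a j = c) ∧ α = c * (((n + k - 1) / k : ℕ) : ℤ)


/-! ### Auxiliary machinery -/

lemma aux_dim_drop {n : ℕ} [NeZero n] (hn : 2 ≤ n) (S : Set (ZMod n → ℝ))
    (f g : (ZMod n → ℝ) →ₗ[ℝ] ℝ) (γ δ : ℝ)
    (hf : ∀ v ∈ S, f v = γ) (hg : ∀ v ∈ S, g v = δ)
    (u1 u2 : ZMod n → ℝ) (h11 : f u1 = 1) (h12 : g u1 = 0) (h21 : f u2 = 0) (h22 : g u2 = 1) :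
    Module.finrank ℝ (affineSpan ℝ S).direction ≠ n - 1 := by
  intro hdim
  have hsurj : Function.Surjective (f.prod g) := by
    rintro ⟨x, y⟩
    refine ⟨x • u1 + y • u2, ?_⟩
    simp [LinearMap.prod_apply, h11, h12, h21, h22]
  have hker : Module.finrank ℝ (LinearMap.ker (f.prod g)) = n - 2 := by
    have := LinearMap.finrank_range_add_finrank_ker (f.prod g)
    rw [LinearMap.range_eq_top.mpr hsurj] at this
    simp [Module.finrank_pi] at this
    omega
  have hle : (affineSpan ℝ S).direction ≤ LinearMap.ker (f.prod g) := by
    rw [direction_affineSpan, vectorSpan_def]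
    refine Submodule.span_le.mpr ?_
    rintro v ⟨v1, hv1, v2, hv2, rfl⟩
    simp only [SetLike.mem_coe, LinearMap.mem_ker, LinearMap.prod_apply, Pi.prod]
    rw [vsub_eq_sub]
    simp [map_sub, hf v1 hv1, hf v2 hv2, hg v1 hv1, hg v2 hv2]
  have := Submodule.finrank_mono hle
  rw [hdim, hker] at this
  omega

noncomputable def coeffLin (n : ℕ) [NeZero n] (c : ZMod n → ℤ) : (ZMod n → ℝ) →ₗ[ℝ] ℝ :=
  ∑ j : ZMod n, (c j : ℝ) • LinearMap.proj j

lemma coeffLin_apply (n : ℕ) [NeZero n] (c : ZMod n → ℤ) (v : ZMod n → ℝ) :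
    coeffLin n c v = ∑ j : ZMod n, (c j : ℝ) * v j := by
  simp [coeffLin]

lemma coeffLin_charVec (n : ℕ) [NeZero n] (c : ZMod n → ℤ) (x : Finset (ZMod n)) :
    coeffLin n c (charVec n x) = ((∑ j ∈ x, c j : ℤ) : ℝ) := by
  rw [coeffLin_apply]
  push_cast
  simp [charVec, mul_ite, Finset.sum_ite_mem]

lemma coeffLin_single (n : ℕ) [NeZero n] (c : ZMod n → ℤ) (j : ZMod n) (v : ℝ) :
    coeffLin n c (Pi.single j v) = (c j : ℝ) * v := by
  rw [coeffLin_apply, Finset.sum_eq_single j]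
  · simp
  · intro i _ hij
    simp [Pi.single_eq_of_ne hij]
  · simp

lemma aux_sum_split {N : ℕ} (W : Finset (ZMod N)) (a : ZMod N → ℤ) (a0 : ℤ)
    (x : Finset (ZMod N)) :
    ∑ i ∈ x, (if i ∈ W then a i else a0) = a0 * x.card + ∑ i ∈ x ∩ W, (a i - a0) := by
  have h : ∀ i ∈ x, (if i ∈ W then a i else a0) = a0 + (if i ∈ W then a i - a0 else 0) := by
    intro i _; split <;> ring
  rw [Finset.sum_congr rfl h, Finset.sum_add_distrib, Finset.sum_const, nsmul_eq_mul,
    Finset.sum_ite_mem]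
  ring

section
variable {s k : ℕ} (hs : 1 ≤ s) (hk : 1 ≤ k)

set_option linter.unusedSectionVars false

include hs hk

lemma aux_range_eq : (s * k + k - 1) / k = s := by
  have hmul : s * k = k * s := Nat.mul_comm s k
  have h1 : s * k + k - 1 = k * s + (k-1) := by
    have : 1 ≤ s * k := Nat.one_le_iff_ne_zero.mpr (by positivity)
    omega
  rw [h1, Nat.mul_add_div (by omega), Nat.div_eq_of_lt (by omega)]
  omega

lemma aux_castk (t : ℕ) : ((t * k : ℕ) : ZMod (s*k)) = ((t % s * k : ℕ) : ZMod (s*k)) := by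
  rw [ZMod.natCast_eq_natCast_iff]
  exact Nat.ModEq.mul_right' k (Nat.mod_modEq t s).symm

lemma aux_mem_xcov {i z : ZMod (s*k)} :
    z ∈ xcov (s*k) k i ↔ ∃ t, t < s ∧ z = i + ((t * k : ℕ) : ZMod (s*k)) := by
  simp [xcov, aux_range_eq hs hk, eq_comm, Finset.mem_image]

lemma aux_card_xcov (i : ZMod (s*k)) : (xcov (s*k) k i).card = s := by
  rw [xcov, aux_range_eq hs hk, Finset.card_image_of_injOn, Finset.card_range]
  intro t1 h1 t2 h2 heq
  simp only [Finset.mem_range, Finset.coe_range, Set.mem_Iio] at h1 h2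
  have h0 : ((t1 * k : ℕ) : ZMod (s*k)) = ((t2 * k : ℕ) : ZMod (s*k)) :=
    add_left_cancel heq
  rw [ZMod.natCast_eq_natCast_iff] at h0
  have h3 : t1 * k < s * k := (Nat.mul_lt_mul_right (by omega : 0 < k)).mpr h1
  have h4 : t2 * k < s * k := (Nat.mul_lt_mul_right (by omega : 0 < k)).mpr h2
  have := (Nat.ModEq.eq_of_lt_of_lt h0 h3 h4)
  exact Nat.eq_of_mul_eq_mul_right (by omega) this

lemma aux_xcov_mem_self (i : ZMod (s*k)) : i ∈ xcov (s*k) k i := by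
  rw [aux_mem_xcov hs hk]; exact ⟨0, by omega, by simp⟩

lemma aux_xcov_eq_of_mem {i w : ZMod (s*k)} (hw : w ∈ xcov (s*k) k i) :
    xcov (s*k) k w = xcov (s*k) k i := by
  obtain ⟨t0, ht0, rfl⟩ := (aux_mem_xcov hs hk).mp hw
  apply Finset.eq_of_subset_of_card_le
  · intro z hz
    obtain ⟨t, ht, rfl⟩ := (aux_mem_xcov hs hk).mp hz
    rw [aux_mem_xcov hs hk]
    refine ⟨(t0 + t) % s, Nat.mod_lt _ (by omega), ?_⟩
    rw [← aux_castk hs hk, add_assoc, ← Nat.cast_add, ← Nat.add_mul]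
  · rw [aux_card_xcov hs hk, aux_card_xcov hs hk]

lemma aux_cover_pos {x : Finset (ZMod (s*k))} (hx : IsCover (s*k) k x) (b : ZMod (s*k))
    (m : ℕ) (hm : m + k ≤ s*k) :
    ∃ y ∈ x, ∃ h, h < k ∧ (y - b).val = m + h := by
  obtain ⟨y, hy⟩ := hx (b + (m : ZMod (s*k)))
  rw [Finset.mem_inter] at hy
  obtain ⟨hyx, hyC⟩ := hy
  simp only [Cseg, Finset.mem_image, Finset.mem_range] at hyC
  obtain ⟨h, hh, rfl⟩ := hyC
  refine ⟨_, hyx, h, hh, ?_⟩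
  have h2 : b + (m:ZMod (s*k)) + (h:ZMod (s*k)) - b = ((m + h : ℕ) : ZMod (s*k)) := by
    push_cast; ring
  haveI : NeZero (s*k) := ⟨Nat.mul_ne_zero (by omega) (by omega)⟩
  rw [h2, ZMod.val_cast_of_lt (by omega)]

lemma aux_cover_card_ge {x : Finset (ZMod (s*k))} (hx : IsCover (s*k) k x) : s ≤ x.card := by
  haveI : NeZero (s*k) := ⟨Nat.mul_ne_zero (by omega) (by omega)⟩
  have H : ∀ t, t < s → ∃ y ∈ x, ∃ h, h < k ∧ (y - 0).val = t*k + h := by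
    intro t ht
    exact aux_cover_pos hs hk hx 0 (t*k) (by
      have h2 : (t+1) * k ≤ s * k := Nat.mul_le_mul_right k (by omega)
      have h3 : (t+1) * k = t*k + k := by ring
      omega)
  choose g hg1 h hk2 hg2 using H
  calc s = (Finset.range s).card := (Finset.card_range s).symm
    _ ≤ x.card := by
        apply Finset.card_le_card_of_injOn (fun t => if ht : t < s then g t ht else 0)
        · intro t ht
          simp only [Finset.mem_coe, Finset.mem_range] at ht
          simp only [ht, dif_pos]
          exact hg1 t ht
        · intro t1 ht1 t2 ht2 heq
          simp only [Finset.mem_coe, Finset.mem_range] at ht1 ht2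
          simp only [ht1, ht2, dif_pos] at heq
          have hv : t1*k + h t1 ht1 = t2*k + h t2 ht2 := by
            rw [← hg2 t1 ht1, ← hg2 t2 ht2, heq]
          have e1 := hk2 t1 ht1
          have e2 := hk2 t2 ht2
          have d1 : (t1*k + h t1 ht1)/k = t1 := by
            rw [Nat.mul_comm t1 k, Nat.mul_add_div (by omega), Nat.div_eq_of_lt e1]; omega
          have d2 : (t2*k + h t2 ht2)/k = t2 := by
            rw [Nat.mul_comm t2 k, Nat.mul_add_div (by omega), Nat.div_eq_of_lt e2]; omega
          rw [← d1, ← d2, hv]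

lemma aux_val_to_eq {z : ZMod (s*k)} {m : ℕ} (hm : m < s*k) (hv : z.val = m) :
    z = (m : ZMod (s*k)) := by
  haveI : NeZero (s*k) := ⟨Nat.mul_ne_zero (by omega) (by omega)⟩
  have h2 := ZMod.val_cast_of_lt hm
  exact ZMod.val_injective _ (by rw [hv, h2])

lemma aux_xcov_isCover (i : ZMod (s*k)) : IsCover (s*k) k (xcov (s*k) k i) := by
  haveI : NeZero (s*k) := ⟨Nat.mul_ne_zero (by omega) (by omega)⟩
  intro m
  set r := (i - m).val with hr
  have hrlt : r < s*k := ZMod.val_lt _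
  set q := r / k with hq
  set rem := r % k with hrem
  have hdm : k * q + rem = r := Nat.div_add_mod r k
  have hqs : q < s := by
    rw [hq]
    exact Nat.div_lt_of_lt_mul (by rwa [Nat.mul_comm] at hrlt)
  have hremk : rem < k := Nat.mod_lt _ (by omega)
  set t := (s - q) % s with ht
  have hts : t < s := Nat.mod_lt _ (by omega)
  have hcast : ((r + t*k : ℕ) : ZMod (s*k)) = ((rem : ℕ) : ZMod (s*k)) := by
    rcases Nat.eq_zero_or_pos q with h0 | h0
    · have ht0 : t = 0 := by rw [ht, h0, Nat.sub_zero, Nat.mod_self]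
      rw [ht0, Nat.zero_mul, Nat.add_zero]
      rw [h0, Nat.mul_zero, Nat.zero_add] at hdm
      rw [hdm]
    · obtain ⟨u, hu⟩ : ∃ u, s = q + u := ⟨s - q, by omega⟩
      have ht' : t = u := by
        rw [ht, hu]
        have : q + u - q = u := by omega
        rw [this, Nat.mod_eq_of_lt (by omega)]
      have hre : r + t*k = rem + s*k := by
        have h2 : q*k + u*k = s*k := by rw [← Nat.add_mul, ← hu]
        rw [← hdm, ht', ← h2]
        ring
      rw [hre, Nat.cast_add, ZMod.natCast_self, add_zero]
  have hmem : i + ((t*k : ℕ) : ZMod (s*k)) = m + ((rem : ℕ) : ZMod (s*k)) := by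
    have him : i = m + ((r:ℕ) : ZMod (s*k)) := by
      have h5 : ((r:ℕ) : ZMod (s*k)) = i - m := by
        apply ZMod.val_injective
        rw [ZMod.val_cast_of_lt hrlt]
      rw [h5]; ring
    calc i + ((t*k : ℕ) : ZMod (s*k)) = m + ((r:ℕ) : ZMod (s*k)) + ((t*k : ℕ) : ZMod (s*k)) := by
          rw [← him]
      _ = m + ((r + t*k : ℕ) : ZMod (s*k)) := by push_cast; ring
      _ = m + ((rem : ℕ) : ZMod (s*k)) := by rw [hcast]
  refine ⟨i + ((t*k : ℕ) : ZMod (s*k)), Finset.mem_inter.mpr ⟨?_, ?_⟩⟩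
  · rw [aux_mem_xcov hs hk]; exact ⟨t, hts, rfl⟩
  · rw [hmem]
    simp only [Cseg, Finset.mem_image, Finset.mem_range]
    exact ⟨rem, hremk, rfl⟩

lemma aux_cover_card_eq {x : Finset (ZMod (s*k))} (hx : IsCover (s*k) k x) (hcard : x.card = s)
    {w : ZMod (s*k)} (hw : w ∈ x) : x = xcov (s*k) k w := by
  haveI : NeZero (s*k) := ⟨Nat.mul_ne_zero (by omega) (by omega)⟩
  set b := w + 1 with hb
  have H : ∀ t, ∃ y, y ∈ x ∧ ∃ h, h < k ∧ (t < s → (y - b).val = t*k + h) := by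
    intro t
    by_cases ht : t < s
    · obtain ⟨y, hy, h, hh, hv⟩ := aux_cover_pos hs hk hx b (t*k) (by
        have h2 : (t+1) * k ≤ s * k := Nat.mul_le_mul_right k (by omega)
        have h3 : (t+1) * k = t*k + k := by ring
        omega)
      exact ⟨y, hy, h, hh, fun _ => hv⟩
    · exact ⟨w, hw, 0, by omega, fun h => absurd h ht⟩
  choose g hg1 h hhk hg2 using H
  have ginj : ∀ t1, t1 < s → ∀ t2, t2 < s → g t1 = g t2 → t1 = t2 := by
    intro t1 ht1 t2 ht2 heq
    have hv : t1*k + h t1 = t2*k + h t2 := by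
      rw [← hg2 t1 ht1, ← hg2 t2 ht2, heq]
    have e1 := hhk t1
    have e2 := hhk t2
    have d1 : (t1*k + h t1)/k = t1 := by
      rw [Nat.mul_comm t1 k, Nat.mul_add_div (by omega), Nat.div_eq_of_lt e1]; omega
    have d2 : (t2*k + h t2)/k = t2 := by
      rw [Nat.mul_comm t2 k, Nat.mul_add_div (by omega), Nat.div_eq_of_lt e2]; omega
    rw [← d1, ← d2, hv]
  have ximg : (Finset.range s).image g = x := by
    apply Finset.eq_of_subset_of_card_le
    · intro y hy
      simp only [Finset.mem_image, Finset.mem_range] at hy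
      obtain ⟨t, ht, rfl⟩ := hy
      exact hg1 t
    · rw [hcard, Finset.card_image_of_injOn, Finset.card_range]
      intro t1 ht1 t2 ht2
      simp only [Finset.mem_coe, Finset.mem_range] at ht1 ht2
      exact ginj t1 ht1 t2 ht2
  have huniq : ∀ y, y ∈ x → ∀ t h', t < s → h' < k → (y - b).val = t*k + h' →
      y = g t ∧ h' = h t := by
    intro y hy t h' ht hh' hv
    have : y ∈ (Finset.range s).image g := by rw [ximg]; exact hy
    simp only [Finset.mem_image, Finset.mem_range] at this
    obtain ⟨t', ht', rfl⟩ := this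
    have hv' := hg2 t' ht'
    have hveq : t'*k + h t' = t*k + h' := by rw [← hv', hv]
    have e1 := hhk t'
    have d1 : (t'*k + h t')/k = t' := by
      rw [Nat.mul_comm t' k, Nat.mul_add_div (by omega), Nat.div_eq_of_lt e1]; omega
    have d2 : (t*k + h')/k = t := by
      rw [Nat.mul_comm t k, Nat.mul_add_div (by omega), Nat.div_eq_of_lt hh']; omega
    have htt : t' = t := by rw [← d1, ← d2, hveq]
    subst htt
    exact ⟨rfl, by omega⟩
  have hwpos : (w - b).val = (s-1)*k + (k-1) := by
    have hn1 : 1 ≤ s * k := Nat.one_le_iff_ne_zero.mpr (Nat.mul_ne_zero (by omega) (by omega))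
    have h1 : w - b = (((s*k) - 1 : ℕ) : ZMod (s*k)) := by
      have : (((s*k) - 1 : ℕ) : ZMod (s*k)) = ((s*k : ℕ) : ZMod (s*k)) - 1 := by
        rw [Nat.cast_sub hn1]; norm_num
      rw [this, ZMod.natCast_self]
      rw [hb]; ring
    rw [h1, ZMod.val_cast_of_lt (by omega)]
    have e : (s-1)*k + k = s*k := by
      rw [← Nat.succ_mul]
      congr 1
      omega
    omega
  have hwlast : w = g (s-1) ∧ (k-1) = h (s-1) :=
    huniq w hw (s-1) (k-1) (by omega) (by omega) hwpos
  have hstep : ∀ t, t + 1 < s → h (t+1) ≤ h t := by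
    intro t ht
    obtain ⟨y, hy, h', hh', hv⟩ := aux_cover_pos hs hk hx b (t*k + h t + 1) (by
      have h2 : (t+2) * k ≤ s * k := Nat.mul_le_mul_right k (by omega)
      have h3 : (t+2) * k = t*k + k + k := by ring
      have := hhk t
      omega)
    have : y ∈ (Finset.range s).image g := by rw [ximg]; exact hy
    simp only [Finset.mem_image, Finset.mem_range] at this
    obtain ⟨t'', ht'', rfl⟩ := this
    have hv'' := hg2 t'' ht''
    have hveq : t''*k + h t'' = t*k + h t + 1 + h' := by rw [← hv'', hv]
    have e0 := hhk t
    have e1 := hhk t''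
    rcases Nat.lt_trichotomy t'' (t+1) with hlt | heq | hgt
    · rcases Nat.lt_or_ge t'' t with hlt2 | hge
      · have h4 : (t''+1) * k ≤ t * k := Nat.mul_le_mul_right k (by omega)
        have h3 : (t''+1) * k = t''*k + k := by ring
        omega
      · have htt : t'' = t := by omega
        subst htt
        omega
    · subst heq
      have h3 : (t+1) * k = t*k + k := by ring
      omega
    · have h4 : (t+2) * k ≤ t'' * k := Nat.mul_le_mul_right k (by omega)
      have h3 : (t+2) * k = t*k + k + k := by ring
      omega
  have hall : ∀ j t, t < s → t + j = s - 1 → h t = k - 1 := by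
    intro j
    induction j with
    | zero =>
        intro t ht hts
        have h0 : t = s - 1 := by omega
        rw [h0]
        exact hwlast.2.symm
    | succ j ih =>
        intro t ht hts
        have h1 : h (t+1) = k - 1 := ih (t+1) (by omega) (by omega)
        have h2 : h (t+1) ≤ h t := hstep t (by omega)
        have := hhk t
        omega
  apply Finset.eq_of_subset_of_card_le
  · intro y hy
    have : y ∈ (Finset.range s).image g := by rw [ximg]; exact hy
    simp only [Finset.mem_image, Finset.mem_range] at this
    obtain ⟨t, ht, rfl⟩ := this
    have hv := hg2 t ht
    rw [hall (s-1-t) t ht (by omega)] at hv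
    have hlt : t*k + (k-1) < s*k := by
      have h2 : (t+1) * k ≤ s * k := Nat.mul_le_mul_right k (by omega)
      have h3 : (t+1) * k = t*k + k := by ring
      omega
    have hy2 : g t - b = ((t*k + (k-1) : ℕ) : ZMod (s*k)) := aux_val_to_eq hs hk hlt hv
    have hy3 : g t = w + (((t+1)*k : ℕ) : ZMod (s*k)) := by
      have harith : t*k + (k-1) + 1 = (t+1)*k := by
        have h3 : (t+1) * k = t*k + k := by ring
        omega
      have h6 : g t = b + ((t*k + (k-1) : ℕ) : ZMod (s*k)) := by
        rw [← hy2]; ring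
      rw [h6, hb, ← harith]
      push_cast
      ring
    rw [aux_mem_xcov hs hk]
    refine ⟨(t+1) % s, Nat.mod_lt _ (by omega), ?_⟩
    rw [hy3, aux_castk hs hk]
  · rw [aux_card_xcov hs hk, hcard]

end

theorem stmt7 (s k : ℕ) (hs : 2 ≤ s) (hk : 3 ≤ k)
    (W : Finset (ZMod (s * k))) (hWne : W.Nonempty) (hWproper : ∃ i : ZMod (s * k), i ∉ W)
    (a : ZMod (s * k) → ℤ) (a0 : ℤ) (ha0 : 1 ≤ a0)
    (ha : ∀ i ∈ W, a0 + 1 ≤ a i ∧ a i ≤ 2 * a0)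
    (hfacet : IsFacet (s * k) k (fun i => if i ∈ W then a i else a0) (((s : ℤ) + 1) * a0)) :
    (∀ i : ZMod (s * k), (xcov (s * k) k i ∩ W).card = 1) ∧
    W.card = k ∧
    (∀ i ∈ W, a i = 2 * a0) ∧
    (∀ i : ZMod (s * k), (if i ∈ W then a i else a0) = a0 * (if i ∈ W then 2 else 1)) := by
  have hs1 : 1 ≤ s := by omega
  have hk1 : 1 ≤ k := by omega
  haveI : NeZero (s*k) := ⟨Nat.mul_ne_zero (by omega) (by omega)⟩
  have hn2 : 2 ≤ s * k := le_trans (by norm_num) (Nat.mul_le_mul hs hk)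
  obtain ⟨hvalid, hdim⟩ := hfacet
  set S : Set (ZMod (s*k) → ℝ) :=
    {v : ZMod (s*k) → ℝ | ∃ x : Finset (ZMod (s*k)),
      IsRoot (s*k) k (fun i => if i ∈ W then a i else a0) (((s : ℤ) + 1) * a0) x ∧
      v = charVec (s*k) x} with hS
  have hsplit : ∀ x : Finset (ZMod (s*k)),
      ∑ i ∈ x, (if i ∈ W then a i else a0) = a0 * x.card + ∑ i ∈ x ∩ W, (a i - a0) :=
    aux_sum_split W a a0
  -- every xcov meets W
  have hA : ∀ i : ZMod (s*k), (xcov (s*k) k i ∩ W).Nonempty := by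
    intro i
    rw [Finset.nonempty_iff_ne_empty]
    intro hemp
    have h1 := hvalid _ (aux_xcov_isCover hs1 hk1 i)
    rw [show (∑ j ∈ xcov (s*k) k i, (fun i => if i ∈ W then a i else a0) j)
        = a0 * (xcov (s*k) k i).card + ∑ j ∈ xcov (s*k) k i ∩ W, (a j - a0)
        from hsplit _] at h1
    rw [hemp, Finset.sum_empty, add_zero, aux_card_xcov hs1 hk1] at h1
    nlinarith [h1, ha0]
  -- roots containing an element of W are xcov's
  have hroots : ∀ x, IsRoot (s*k) k (fun i => if i ∈ W then a i else a0) (((s:ℤ)+1)*a0) x →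
      ∀ w, w ∈ x → w ∈ W → x = xcov (s*k) k w := by
    intro x hx w hwx hwW
    have hge := aux_cover_card_ge hs1 hk1 hx.1
    have heq : a0 * x.card + ∑ i ∈ x ∩ W, (a i - a0) = ((s:ℤ)+1)*a0 := by
      rw [← hsplit x]; exact hx.2
    have hsum1 : 1 ≤ ∑ i ∈ x ∩ W, (a i - a0) := by
      have hpos : ∀ i ∈ x ∩ W, (1:ℤ) ≤ a i - a0 := by
        intro i hi
        have := ha i (Finset.mem_inter.mp hi).2
        omega
      have h2 : (x ∩ W).card • (1:ℤ) ≤ ∑ i ∈ x ∩ W, (a i - a0) :=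
        Finset.card_nsmul_le_sum _ _ _ hpos
      have h3 : 1 ≤ (x ∩ W).card := Finset.card_pos.mpr ⟨w, Finset.mem_inter.mpr ⟨hwx, hwW⟩⟩
      have h4 : (1:ℤ) ≤ ((x ∩ W).card : ℤ) := by exact_mod_cast h3
      rw [nsmul_eq_mul] at h2
      nlinarith
    have hcle : x.card ≤ s := by
      by_contra hgt
      push_neg at hgt
      have h4 : ((s:ℤ)+1) ≤ (x.card : ℤ) := by exact_mod_cast hgt
      nlinarith
    exact aux_cover_card_eq hs1 hk1 hx.1 (le_antisymm hcle hge) hwx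
  -- each xcov through an element of W is a root
  have hrootx : ∀ w ∈ W,
      IsRoot (s*k) k (fun i => if i ∈ W then a i else a0) (((s:ℤ)+1)*a0) (xcov (s*k) k w) := by
    intro w hw
    by_contra hnr
    have hnone : ∀ x, IsRoot (s*k) k (fun i => if i ∈ W then a i else a0) (((s:ℤ)+1)*a0) x →
        w ∉ x := by
      intro x hx hwx
      have hxe := hroots x hx w hwx hw
      rw [hxe] at hx
      exact hnr hx
    obtain ⟨j0, hj0⟩ := hWproper
    have hj0w : j0 ≠ w := fun h => hj0 (h ▸ hw)
    have ha0r : ((a0:ℝ)) ≠ 0 := by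
      have : (0:ℝ) < (a0:ℝ) := by exact_mod_cast ha0
      linarith
    have hcj0 : (if j0 ∈ W then a j0 else a0) = a0 := if_neg hj0
    set f := coeffLin (s*k) (fun i => if i ∈ W then a i else a0) with hf
    set g : (ZMod (s*k) → ℝ) →ₗ[ℝ] ℝ := LinearMap.proj w with hg
    set u1 : ZMod (s*k) → ℝ := Pi.single j0 ((a0:ℝ)⁻¹) with hu1
    set u2 : ZMod (s*k) → ℝ :=
      Pi.single w 1 - (((if w ∈ W then a w else a0 : ℤ) : ℝ) * (a0:ℝ)⁻¹) •
        (Pi.single j0 (1:ℝ) : ZMod (s*k) → ℝ)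
      with hu2
    have e11 : f u1 = 1 := by
      rw [hf, hu1, coeffLin_single, hcj0]
      field_simp
    have e12 : g u1 = 0 := by
      rw [hg, hu1]
      simp only [LinearMap.proj_apply]
      rw [Pi.single_eq_of_ne (Ne.symm hj0w)]
    have e21 : f u2 = 0 := by
      rw [hf, hu2, map_sub, map_smul, coeffLin_single, coeffLin_single]
      simp only [smul_eq_mul, mul_one]
      rw [hcj0]
      field_simp
      ring
    have e22 : g u2 = 1 := by
      rw [hg, hu2]
      simp only [LinearMap.sub_apply, LinearMap.proj_apply, Pi.sub_apply, Pi.smul_apply,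
        smul_eq_mul]
      rw [Pi.single_eq_same, Pi.single_eq_of_ne (Ne.symm hj0w)]
      ring
    refine aux_dim_drop hn2 S f g (((((s:ℤ)+1)*a0 : ℤ) : ℝ)) 0 ?_ ?_ u1 u2 e11 e12 e21 e22 hdim
    · rintro v ⟨x, hx, rfl⟩
      rw [hf, coeffLin_charVec]
      exact_mod_cast congrArg (fun z : ℤ => (z:ℝ)) hx.2
    · rintro v ⟨x, hx, rfl⟩
      rw [hg]
      simp only [LinearMap.proj_apply, charVec]
      rw [if_neg (hnone x hx)]
  -- the weight of each class through W is exactly a0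
  have hT : ∀ w ∈ W, ∑ i ∈ xcov (s*k) k w ∩ W, (a i - a0) = a0 := by
    intro w hw
    have h1 : a0 * ((xcov (s*k) k w).card : ℤ) + ∑ i ∈ xcov (s*k) k w ∩ W, (a i - a0)
        = ((s:ℤ)+1)*a0 := by
      rw [← hsplit _]; exact (hrootx w hw).2
    rw [aux_card_xcov hs1 hk1] at h1
    nlinarith
  -- xcov w ∩ W = {w} for w ∈ W
  have hsingle : ∀ w ∈ W, xcov (s*k) k w ∩ W = {w} := by
    intro w hw
    rw [Finset.eq_singleton_iff_unique_mem]
    refine ⟨Finset.mem_inter.mpr ⟨aux_xcov_mem_self hs1 hk1 w, hw⟩, ?_⟩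
    intro w2 hw2
    by_contra hne
    have hw2x := (Finset.mem_inter.mp hw2).1
    have hw2W := (Finset.mem_inter.mp hw2).2
    have hiff : ∀ x, IsRoot (s*k) k (fun i => if i ∈ W then a i else a0) (((s:ℤ)+1)*a0) x →
        (w ∈ x ↔ w2 ∈ x) := by
      intro x hx
      constructor
      · intro hwx
        rw [hroots x hx w hwx hw]
        exact hw2x
      · intro hw2x'
        rw [hroots x hx w2 hw2x' hw2W, aux_xcov_eq_of_mem hs1 hk1 hw2x]
        exact aux_xcov_mem_self hs1 hk1 w
    obtain ⟨j0, hj0⟩ := hWproper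
    have hj0w : j0 ≠ w := fun h => hj0 (h ▸ hw)
    have hj0w2 : j0 ≠ w2 := fun h => hj0 (h ▸ hw2W)
    have ha0r : ((a0:ℝ)) ≠ 0 := by
      have : (0:ℝ) < (a0:ℝ) := by exact_mod_cast ha0
      linarith
    have hcj0 : (if j0 ∈ W then a j0 else a0) = a0 := if_neg hj0
    set f := coeffLin (s*k) (fun i => if i ∈ W then a i else a0) with hf
    set g : (ZMod (s*k) → ℝ) →ₗ[ℝ] ℝ :=
      (LinearMap.proj w : (ZMod (s*k) → ℝ) →ₗ[ℝ] ℝ) -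
      (LinearMap.proj w2 : (ZMod (s*k) → ℝ) →ₗ[ℝ] ℝ) with hg
    set u1 : ZMod (s*k) → ℝ := Pi.single j0 ((a0:ℝ)⁻¹) with hu1
    set u2 : ZMod (s*k) → ℝ :=
      Pi.single w 1 - (((if w ∈ W then a w else a0 : ℤ) : ℝ) * (a0:ℝ)⁻¹) •
        (Pi.single j0 (1:ℝ) : ZMod (s*k) → ℝ)
      with hu2
    have e11 : f u1 = 1 := by
      rw [hf, hu1, coeffLin_single, hcj0]
      field_simp
    have e12 : g u1 = 0 := by
      rw [hg, hu1]
      simp only [LinearMap.sub_apply, LinearMap.proj_apply]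
      rw [Pi.single_eq_of_ne (Ne.symm hj0w), Pi.single_eq_of_ne (Ne.symm hj0w2)]
      ring
    have e21 : f u2 = 0 := by
      rw [hf, hu2, map_sub, map_smul, coeffLin_single, coeffLin_single]
      simp only [smul_eq_mul, mul_one]
      rw [hcj0]
      field_simp
      ring
    have e22 : g u2 = 1 := by
      rw [hg, hu2]
      simp only [LinearMap.sub_apply, LinearMap.proj_apply, Pi.sub_apply, Pi.smul_apply,
        smul_eq_mul]
      rw [Pi.single_eq_same, Pi.single_eq_of_ne (Ne.symm hj0w),
        Pi.single_eq_of_ne (fun h => hne h : w2 ≠ w), Pi.single_eq_of_ne (Ne.symm hj0w2)]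
      ring
    refine aux_dim_drop hn2 S f g (((((s:ℤ)+1)*a0 : ℤ) : ℝ)) 0 ?_ ?_ u1 u2 e11 e12 e21 e22 hdim
    · rintro v ⟨x, hx, rfl⟩
      rw [hf, coeffLin_charVec]
      exact_mod_cast congrArg (fun z : ℤ => (z:ℝ)) hx.2
    · rintro v ⟨x, hx, rfl⟩
      rw [hg]
      simp only [LinearMap.sub_apply, LinearMap.proj_apply, charVec]
      rcases (hiff x hx) with ⟨h1, h2⟩
      by_cases hwx : w ∈ x
      · rw [if_pos hwx, if_pos (h1 hwx)]; ring
      · have hw2x' : w2 ∉ x := fun hc => hwx (h2 hc)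
        rw [if_neg hwx, if_neg hw2x']; ring
  -- conclusion (1)
  have goal1 : ∀ i : ZMod (s*k), (xcov (s*k) k i ∩ W).card = 1 := by
    intro i
    obtain ⟨w, hwmem⟩ := hA i
    have hwx := (Finset.mem_inter.mp hwmem).1
    have hwW := (Finset.mem_inter.mp hwmem).2
    rw [← aux_xcov_eq_of_mem hs1 hk1 hwx, hsingle w hwW, Finset.card_singleton]
  -- conclusion (2)
  have goal3 : ∀ i ∈ W, a i = 2 * a0 := by
    intro w hw
    have h1 := hT w hw
    rw [hsingle w hw, Finset.sum_singleton] at h1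
    omega
  refine ⟨goal1, ?_, goal3, ?_⟩
  · -- |W| = k
    have hWeq : W = (Finset.range k).biUnion
        (fun j => xcov (s*k) k ((j : ℕ) : ZMod (s*k)) ∩ W) := by
      apply Finset.ext
      intro w
      simp only [Finset.mem_biUnion, Finset.mem_range, Finset.mem_inter]
      constructor
      · intro hw
        refine ⟨w.val % k, Nat.mod_lt _ (by omega), ?_, hw⟩
        rw [aux_mem_xcov hs1 hk1]
        refine ⟨w.val / k, ?_, ?_⟩
        · exact Nat.div_lt_of_lt_mul
            (lt_of_lt_of_le (ZMod.val_lt w) (le_of_eq (Nat.mul_comm s k)))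
        · have h1 : w.val % k + (w.val / k) * k = w.val := by
            have := Nat.div_add_mod w.val k
            have h2 : (w.val / k) * k = k * (w.val / k) := Nat.mul_comm _ _
            omega
          calc w = ((w.val : ℕ) : ZMod (s*k)) := (ZMod.natCast_rightInverse w).symm
            _ = ((w.val % k : ℕ) : ZMod (s*k)) + (((w.val / k) * k : ℕ) : ZMod (s*k)) := by
                rw [← Nat.cast_add, h1]
      · rintro ⟨j, _, _, hw⟩
        exact hw
    rw [hWeq, Finset.card_biUnion, Finset.sum_congr rfl
      (fun j _ => goal1 ((j : ℕ) : ZMod (s*k)))]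
    · simp
    · intro j1 hj1 j2 hj2 hne
      simp only [Finset.mem_coe, Finset.mem_range] at hj1 hj2
      rw [Function.onFun, Finset.disjoint_left]
      intro z hz1 hz2
      have hz1x := (Finset.mem_inter.mp hz1).1
      have hz2x := (Finset.mem_inter.mp hz2).1
      obtain ⟨t1, ht1, rfl⟩ := (aux_mem_xcov hs1 hk1).mp hz1x
      obtain ⟨t2, ht2, heq⟩ := (aux_mem_xcov hs1 hk1).mp hz2x
      have hcast : ((j1 + t1*k : ℕ) : ZMod (s*k)) = ((j2 + t2*k : ℕ) : ZMod (s*k)) := by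
        push_cast
        push_cast at heq
        linear_combination heq
      rw [ZMod.natCast_eq_natCast_iff] at hcast
      have hb1 : j1 + t1*k < s*k := by
        have h2 : (t1+1) * k ≤ s * k := Nat.mul_le_mul_right k (by omega)
        have h3 : (t1+1) * k = t1*k + k := by ring
        omega
      have hb2 : j2 + t2*k < s*k := by
        have h2 : (t2+1) * k ≤ s * k := Nat.mul_le_mul_right k (by omega)
        have h3 : (t2+1) * k = t2*k + k := by ring
        omega
      have heqn := Nat.ModEq.eq_of_lt_of_lt hcast hb1 hb2
      have d1 : (j1 + t1*k) % k = j1 := by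
        rw [Nat.add_mul_mod_self_right, Nat.mod_eq_of_lt hj1]
      have d2 : (j2 + t2*k) % k = j2 := by
        rw [Nat.add_mul_mod_self_right, Nat.mod_eq_of_lt hj2]
      apply hne
      rw [← d1, ← d2, heqn]
  · -- final rewriting
    intro i
    by_cases hi : i ∈ W
    · rw [if_pos hi, if_pos hi, goal3 i hi]
      ring
    · rw [if_neg hi, if_neg hi]
      ring
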